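/- The symmetry-broken Kepler Hamiltonians I₁ = ((u₁² − κ²)(p₁/m)² − (u₂² − κ²)(p₂/n)²)/(u₁² − u₂²) + α/(u₁ + u₂) and I₂ = (−u₂²(u₁² − κ²)(p₁/m)² + u₁²(u₂² − κ²)(p₂/n)²)/(u₁² − u₂²) + αu₁u₂/(u₁ + u₂) Poisson-commute for arbitrary nonzero constants m, n. -/

import Mathlib

/-- Canonical Poisson bracket of two functions on `T*ℝ²` with canonical
coordinates `(u₁, u₂, p₁, p₂)`. -/
noncomputable def poissonBracket (F G : ℝ → ℝ → ℝ → ℝ → ℝ) (u1 u2 p1 p2 : ℝ) : ℝ :=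
  deriv (fun x => F x u2 p1 p2) u1 * deriv (fun x => G u1 u2 x p2) p1
  - deriv (fun x => F u1 u2 x p2) p1 * deriv (fun x => G x u2 p1 p2) u1
  + deriv (fun x => F u1 x p1 p2) u2 * deriv (fun x => G u1 u2 p1 x) p2
  - deriv (fun x => F u1 u2 p1 x) p2 * deriv (fun x => G u1 x p1 p2) u2

/-- Symmetry-broken Kepler integral `I₁` with momenta rescaled by `m`, `n`. -/
noncomputable def keplerI1mn (κ α m n : ℝ) : ℝ → ℝ → ℝ → ℝ → ℝ := fun u1 u2 p1 p2 =>
  ((u1 ^ 2 - κ ^ 2) * (p1 / m) ^ 2 - (u2 ^ 2 - κ ^ 2) * (p2 / n) ^ 2)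
      / (u1 ^ 2 - u2 ^ 2) + α / (u1 + u2)

/-- Symmetry-broken Kepler integral `I₂` with momenta rescaled by `m`, `n`. -/
noncomputable def keplerI2mn (κ α m n : ℝ) : ℝ → ℝ → ℝ → ℝ → ℝ := fun u1 u2 p1 p2 =>
  (-u2 ^ 2 * (u1 ^ 2 - κ ^ 2) * (p1 / m) ^ 2 + u1 ^ 2 * (u2 ^ 2 - κ ^ 2) * (p2 / n) ^ 2)
      / (u1 ^ 2 - u2 ^ 2) + α * u1 * u2 / (u1 + u2)

set_option maxHeartbeats 2000000 in
/-- The symmetry-broken Kepler Hamiltonians Poisson-commute for all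
nonzero constants `m`, `n`. -/
theorem kepler_mn_integrals_commute (κ α m n : ℝ) (hm : m ≠ 0) (hn : n ≠ 0)
    (u1 u2 p1 p2 : ℝ) (hne : u1 ^ 2 ≠ u2 ^ 2) (hsum : u1 + u2 ≠ 0) :
    poissonBracket (keplerI1mn κ α m n) (keplerI2mn κ α m n) u1 u2 p1 p2 = 0 := by
  have hD : u1 ^ 2 - u2 ^ 2 ≠ 0 := sub_ne_zero.mpr hne
  -- ∂F/∂u1
  have e1 : deriv (fun x : ℝ =>
      ((x ^ 2 - κ ^ 2) * (p1 / m) ^ 2 - (u2 ^ 2 - κ ^ 2) * (p2 / n) ^ 2)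
        / (x ^ 2 - u2 ^ 2) + α / (x + u2)) u1
      = ((2 * u1 * (p1 / m) ^ 2) * (u1 ^ 2 - u2 ^ 2)
          - ((u1 ^ 2 - κ ^ 2) * (p1 / m) ^ 2 - (u2 ^ 2 - κ ^ 2) * (p2 / n) ^ 2) * (2 * u1))
          / (u1 ^ 2 - u2 ^ 2) ^ 2 - α / (u1 + u2) ^ 2 := by
    have h := (((((hasDerivAt_pow 2 u1).sub_const (κ ^ 2)).mul_const ((p1 / m) ^ 2)).sub_const
        ((u2 ^ 2 - κ ^ 2) * (p2 / n) ^ 2)).div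
        ((hasDerivAt_pow 2 u1).sub_const (u2 ^ 2)) hD).add
        ((hasDerivAt_const u1 α).div ((hasDerivAt_id u1).add_const u2) hsum)
    simp only [id_eq] at h
    exact h.deriv.trans (by ring)
  -- ∂F/∂u2
  have e2 : deriv (fun x : ℝ =>
      ((u1 ^ 2 - κ ^ 2) * (p1 / m) ^ 2 - (x ^ 2 - κ ^ 2) * (p2 / n) ^ 2)
        / (u1 ^ 2 - x ^ 2) + α / (u1 + x)) u2
      = ((-(2 * u2 * (p2 / n) ^ 2)) * (u1 ^ 2 - u2 ^ 2)
          + ((u1 ^ 2 - κ ^ 2) * (p1 / m) ^ 2 - (u2 ^ 2 - κ ^ 2) * (p2 / n) ^ 2) * (2 * u2))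
          / (u1 ^ 2 - u2 ^ 2) ^ 2 - α / (u1 + u2) ^ 2 := by
    have h := (((((hasDerivAt_pow 2 u2).sub_const (κ ^ 2)).mul_const ((p2 / n) ^ 2)).const_sub
        ((u1 ^ 2 - κ ^ 2) * (p1 / m) ^ 2)).div
        ((hasDerivAt_pow 2 u2).const_sub (u1 ^ 2)) hD).add
        ((hasDerivAt_const u2 α).div ((hasDerivAt_id u2).const_add u1) hsum)
    simp only [id_eq] at h
    exact h.deriv.trans (by ring)
  -- ∂F/∂p1
  have e3 : deriv (fun x : ℝ =>
      ((u1 ^ 2 - κ ^ 2) * (x / m) ^ 2 - (u2 ^ 2 - κ ^ 2) * (p2 / n) ^ 2)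
        / (u1 ^ 2 - u2 ^ 2) + α / (u1 + u2)) p1
      = (u1 ^ 2 - κ ^ 2) * (2 * p1 / m ^ 2) / (u1 ^ 2 - u2 ^ 2) := by
    have h := ((((((hasDerivAt_id p1).div_const m).pow 2).const_mul (u1 ^ 2 - κ ^ 2)).sub_const
        ((u2 ^ 2 - κ ^ 2) * (p2 / n) ^ 2)).div_const (u1 ^ 2 - u2 ^ 2)).add_const
        (α / (u1 + u2))
    simp only [id_eq] at h
    exact h.deriv.trans (by norm_num; ring)
  -- ∂F/∂p2
  have e4 : deriv (fun x : ℝ =>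
      ((u1 ^ 2 - κ ^ 2) * (p1 / m) ^ 2 - (u2 ^ 2 - κ ^ 2) * (x / n) ^ 2)
        / (u1 ^ 2 - u2 ^ 2) + α / (u1 + u2)) p2
      = -((u2 ^ 2 - κ ^ 2) * (2 * p2 / n ^ 2)) / (u1 ^ 2 - u2 ^ 2) := by
    have h := ((((((hasDerivAt_id p2).div_const n).pow 2).const_mul (u2 ^ 2 - κ ^ 2)).const_sub
        ((u1 ^ 2 - κ ^ 2) * (p1 / m) ^ 2)).div_const (u1 ^ 2 - u2 ^ 2)).add_const
        (α / (u1 + u2))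
    simp only [id_eq] at h
    exact h.deriv.trans (by norm_num; ring)
  -- ∂G/∂u1
  have e5 : deriv (fun x : ℝ =>
      (-u2 ^ 2 * (x ^ 2 - κ ^ 2) * (p1 / m) ^ 2 + x ^ 2 * (u2 ^ 2 - κ ^ 2) * (p2 / n) ^ 2)
        / (x ^ 2 - u2 ^ 2) + α * x * u2 / (x + u2)) u1
      = ((-u2 ^ 2 * (2 * u1) * (p1 / m) ^ 2 + 2 * u1 * (u2 ^ 2 - κ ^ 2) * (p2 / n) ^ 2)
          * (u1 ^ 2 - u2 ^ 2)
          - (-u2 ^ 2 * (u1 ^ 2 - κ ^ 2) * (p1 / m) ^ 2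
              + u1 ^ 2 * (u2 ^ 2 - κ ^ 2) * (p2 / n) ^ 2) * (2 * u1))
          / (u1 ^ 2 - u2 ^ 2) ^ 2
        + (α * u2 * (u1 + u2) - α * u1 * u2) / (u1 + u2) ^ 2 := by
    have h := ((((((hasDerivAt_pow 2 u1).sub_const (κ ^ 2)).const_mul
        (-u2 ^ 2)).mul_const ((p1 / m) ^ 2)).add
        (((hasDerivAt_pow 2 u1).mul_const (u2 ^ 2 - κ ^ 2)).mul_const ((p2 / n) ^ 2))).div
        ((hasDerivAt_pow 2 u1).sub_const (u2 ^ 2)) hD).add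
        ((((hasDerivAt_id u1).const_mul α).mul_const u2).div
          ((hasDerivAt_id u1).add_const u2) hsum)
    simp only [id_eq] at h
    exact h.deriv.trans (by simp only [Pi.add_apply, Pi.neg_apply]; ring)
  -- ∂G/∂u2
  have e6 : deriv (fun x : ℝ =>
      (-x ^ 2 * (u1 ^ 2 - κ ^ 2) * (p1 / m) ^ 2 + u1 ^ 2 * (x ^ 2 - κ ^ 2) * (p2 / n) ^ 2)
        / (u1 ^ 2 - x ^ 2) + α * u1 * x / (u1 + x)) u2
      = ((-(2 * u2) * (u1 ^ 2 - κ ^ 2) * (p1 / m) ^ 2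
            + u1 ^ 2 * (2 * u2) * (p2 / n) ^ 2) * (u1 ^ 2 - u2 ^ 2)
          + (-u2 ^ 2 * (u1 ^ 2 - κ ^ 2) * (p1 / m) ^ 2
              + u1 ^ 2 * (u2 ^ 2 - κ ^ 2) * (p2 / n) ^ 2) * (2 * u2))
          / (u1 ^ 2 - u2 ^ 2) ^ 2
        + (α * u1 * (u1 + u2) - α * u1 * u2) / (u1 + u2) ^ 2 := by
    have h := (((((hasDerivAt_pow 2 u2).neg.mul_const (u1 ^ 2 - κ ^ 2)).mul_const
        ((p1 / m) ^ 2)).add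
        ((((hasDerivAt_pow 2 u2).sub_const (κ ^ 2)).const_mul (u1 ^ 2)).mul_const
          ((p2 / n) ^ 2))).div
        ((hasDerivAt_pow 2 u2).const_sub (u1 ^ 2)) hD).add
        (((hasDerivAt_id u2).const_mul (α * u1)).div
          ((hasDerivAt_id u2).const_add u1) hsum)
    simp only [id_eq] at h
    exact h.deriv.trans (by simp only [Pi.add_apply, Pi.neg_apply]; ring)
  -- ∂G/∂p1
  have e7 : deriv (fun x : ℝ =>
      (-u2 ^ 2 * (u1 ^ 2 - κ ^ 2) * (x / m) ^ 2 + u1 ^ 2 * (u2 ^ 2 - κ ^ 2) * (p2 / n) ^ 2)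
        / (u1 ^ 2 - u2 ^ 2) + α * u1 * u2 / (u1 + u2)) p1
      = -u2 ^ 2 * (u1 ^ 2 - κ ^ 2) * (2 * p1 / m ^ 2) / (u1 ^ 2 - u2 ^ 2) := by
    have h := ((((((hasDerivAt_id p1).div_const m).pow 2).const_mul
        (-u2 ^ 2 * (u1 ^ 2 - κ ^ 2))).add_const
        (u1 ^ 2 * (u2 ^ 2 - κ ^ 2) * (p2 / n) ^ 2)).div_const (u1 ^ 2 - u2 ^ 2)).add_const
        (α * u1 * u2 / (u1 + u2))
    simp only [id_eq] at h
    exact h.deriv.trans (by norm_num; ring)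
  -- ∂G/∂p2
  have e8 : deriv (fun x : ℝ =>
      (-u2 ^ 2 * (u1 ^ 2 - κ ^ 2) * (p1 / m) ^ 2 + u1 ^ 2 * (u2 ^ 2 - κ ^ 2) * (x / n) ^ 2)
        / (u1 ^ 2 - u2 ^ 2) + α * u1 * u2 / (u1 + u2)) p2
      = u1 ^ 2 * (u2 ^ 2 - κ ^ 2) * (2 * p2 / n ^ 2) / (u1 ^ 2 - u2 ^ 2) := by
    have h := ((((((hasDerivAt_id p2).div_const n).pow 2).const_mul
        (u1 ^ 2 * (u2 ^ 2 - κ ^ 2))).const_add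
        (-u2 ^ 2 * (u1 ^ 2 - κ ^ 2) * (p1 / m) ^ 2)).div_const (u1 ^ 2 - u2 ^ 2)).add_const
        (α * u1 * u2 / (u1 + u2))
    simp only [id_eq] at h
    exact h.deriv.trans (by norm_num; ring)
  simp only [poissonBracket, keplerI1mn, keplerI2mn]
  rw [e1, e2, e3, e4, e5, e6, e7, e8]
  field_simp
  ring
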